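/- Converse direction: let K(t) be a family of pairwise commuting endomorphisms of V, polynomial of degree n−1 in t with leading coefficient Id. If vectors u(t) satisfy K(t)u(s) = K(s)u(t) for all s, t, then there is a vector w (namely w = Σᵢ cᵢ u(sᵢ) for suitable interpolation coefficients cᵢ at n distinct points) with K(t)w = u(t) for all t. -/
import Mathlib


/-- Converse direction: let `K(t) = t^{n−1}·Id + Σ_{i<n−1} t^i·c_i` be a family of pairwise
commuting endomorphisms, polynomial of degree `n−1` in `t` with leading coefficient `Id`.
If vectors `u(t)` satisfy `K(t)u(s) = K(s)u(t)` for all `s, t`, then there is a vector `w`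
with `K(t)w = u(t)` for all `t`. -/
theorem potential_from_compatibility {F V : Type*} [Field F] [CharZero F] [AddCommGroup V]
    [Module F V] [FiniteDimensional F V]
    (n : ℕ) (hn : 1 ≤ n) (c : ℕ → Module.End F V) (K : F → Module.End F V)
    (hKpoly : ∀ t : F, K t = t ^ (n - 1) • (1 : Module.End F V)
      + ∑ i ∈ Finset.range (n - 1), t ^ i • c i)
    (hcomm : ∀ s t : F, K s * K t = K t * K s)
    (u : F → V) (hu : ∀ s t : F, K t (u s) = K s (u t))
    (s : Fin n → F) (hs : Function.Injective s) :
    ∃ w : V, ∀ t : F, K t w = u t := by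
  have hnlt : n - 1 < n := Nat.sub_lt hn one_pos
  set A : Matrix (Fin n) (Fin n) F := (Matrix.vandermonde s).transpose with hAdef
  have hAdet : A.det ≠ 0 := by
    rw [hAdef, Matrix.det_transpose, Matrix.det_vandermonde_ne_zero_iff]
    exact hs
  set e : Fin n → F := Pi.single ⟨n - 1, hnlt⟩ 1 with he
  set d : Fin n → F := A⁻¹.mulVec e with hd
  have hAd : A.mulVec d = e := by
    rw [hd, Matrix.mulVec_mulVec, Matrix.mul_nonsing_inv _ (isUnit_iff_ne_zero.mpr hAdet), Matrix.one_mulVec]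
  have hrow : ∀ i : Fin n, ∑ j, s j ^ (i : ℕ) * d j = e i := by
    intro i
    have := congrFun hAd i
    simpa [Matrix.mulVec, dotProduct, hAdef, Matrix.vandermonde] using this
  refine ⟨∑ j, d j • u (s j), fun t => ?_⟩
  have h1 : K t (∑ j, d j • u (s j)) = ∑ j, d j • K (s j) (u t) := by
    rw [map_sum]
    exact Finset.sum_congr rfl fun j _ => by rw [map_smul, hu]
  rw [h1]
  have h2 : ∀ j : Fin n, K (s j) (u t)
      = s j ^ (n - 1) • u t + ∑ i ∈ Finset.range (n - 1), s j ^ i • c i (u t) := by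
    intro j
    rw [hKpoly]
    simp [LinearMap.sum_apply]
  calc ∑ j, d j • K (s j) (u t)
      = (∑ j, d j * s j ^ (n - 1)) • u t
        + ∑ i ∈ Finset.range (n - 1), (∑ j, d j * s j ^ i) • c i (u t) := by
        simp only [h2, smul_add, Finset.sum_add_distrib, Finset.smul_sum, smul_smul,
          Finset.sum_smul]
        rw [Finset.sum_comm]
    _ = u t := by
        have hlead : (∑ j, d j * s j ^ (n - 1)) = 1 := by
          have := hrow ⟨n - 1, hnlt⟩
          simp only [he, Pi.single_eq_same] at this
          rw [← this]
          exact Finset.sum_congr rfl fun j _ => mul_comm _ _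
        have hzero : ∀ i ∈ Finset.range (n - 1), (∑ j, d j * s j ^ i) = 0 := by
          intro i hi
          rw [Finset.mem_range] at hi
          have := hrow ⟨i, hi.trans hnlt⟩
          simp only [he] at this
          rw [Pi.single_eq_of_ne (by simp [Fin.ext_iff, Nat.ne_of_lt hi])] at this
          rw [← this]
          exact Finset.sum_congr rfl fun j _ => mul_comm _ _
        rw [hlead, one_smul]
        rw [Finset.sum_congr rfl fun i hi => by rw [hzero i hi, zero_smul]]
        simp
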